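/- If |ψ⟩ is an m-qubit stabilizer state and the projection P^+ = |Φ^+⟩⟨Φ^+| ⊗ I^{⊗(m-2)} onto the Bell state of the first two qubits does not annihilate |ψ⟩, then the resulting (m-2)-qubit state |ψ*⟩ defined by P^+|ψ⟩ = |Φ^+⟩ ⊗ |ψ*⟩ is again a stabilizer state. -/

import Mathlib

open Finset

/-- The Pauli operator `c · X^x Z^z` acting on a state of qubits indexed by `q`:
`X^x Z^z |t⟩ = (-1)^{z·t} |t+x⟩`. -/
noncomputable def pauliAct {q : Type} [Fintype q] (c : ℂ) (x z : q → ZMod 2)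
    (ψ : (q → ZMod 2) → ℂ) : (q → ZMod 2) → ℂ :=
  fun s => c * (-1 : ℂ) ^ ((∑ j, z j * (s j + x j)).val) * ψ (s + x)

/-- `ψ` is a stabilizer state: it is nonzero and is stabilized by
`card q` Pauli operators whose symplectic vectors are linearly independent
(so it is the unique joint `+1`-eigenstate of an abelian Pauli subgroup with
`card q` independent generators not containing `−I`). -/
def IsStabilizerState {q : Type} [Fintype q] [DecidableEq q]
    (ψ : (q → ZMod 2) → ℂ) : Prop :=
  ψ ≠ 0 ∧ ∃ (c : Fin (Fintype.card q) → ℂ)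
    (x z : Fin (Fintype.card q) → q → ZMod 2),
      LinearIndependent (ZMod 2) (fun i => Sum.elim (x i) (z i)) ∧
        ∀ i, pauliAct (c i) (x i) (z i) ψ = ψ

/-- Insert the value `kk` in the first two positions: `(kk, kk, t)`. -/
def emb {r : ℕ} (kk : ZMod 2) (t : Fin r → ZMod 2) : Fin (r + 2) → ZMod 2 :=
  Fin.cons kk (Fin.cons kk t)

/-- The projector `P⁺ = |Φ⁺⟩⟨Φ⁺| ⊗ I^{⊗(m-2)}` onto the (unnormalized) Bell
state `|Φ⁺⟩ = |00⟩+|11⟩` of the first two qubits. -/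
noncomputable def bellProj {r : ℕ} (ψ : (Fin (r + 2) → ZMod 2) → ℂ) :
    (Fin (r + 2) → ZMod 2) → ℂ :=
  fun s => (if s 0 = s 1 then (1 : ℂ) else 0) *
    ∑ kk : ZMod 2, ψ (emb kk (fun j => s j.succ.succ))

namespace BellAux

lemma zmod2_cases (a : ZMod 2) : a = 0 ∨ a = 1 := by revert a; decide

lemma zmod2_add_eq_zero {a b : ZMod 2} (h : a + b = 0) : a = b := by
  revert h; revert a b; decide

lemma neg_pow_add (a b : ZMod 2) :
    ((-1 : ℂ)) ^ ((a + b).val) = (-1) ^ a.val * (-1) ^ b.val := by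
  rcases zmod2_cases a with ha | ha <;> rcases zmod2_cases b with hb | hb <;>
    subst ha <;> subst hb <;>
      norm_num [show ((2:ZMod 2)).val = 0 from rfl, show ((1:ZMod 2)).val = 1 from rfl,
        show ((0:ZMod 2)).val = 0 from rfl]

lemma neg_pow_inj {a b : ZMod 2} (h : ((-1 : ℂ)) ^ a.val = (-1) ^ b.val) : a = b := by
  rcases zmod2_cases a with ha | ha <;> rcases zmod2_cases b with hb | hb <;>
    subst ha <;> subst hb <;>
      first | rfl | (norm_num [show ((1:ZMod 2)).val = 1 from rfl,
        show ((0:ZMod 2)).val = 0 from rfl] at h)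

lemma pauliAct_comp {q : Type} [Fintype q] (c c' : ℂ) (x z x' z' : q → ZMod 2)
    (ψ : (q → ZMod 2) → ℂ) :
    pauliAct c x z (pauliAct c' x' z' ψ)
      = pauliAct (c * c' * (-1) ^ ((∑ j, z j * x' j).val)) (x + x') (z + z') ψ := by
  funext s
  simp only [pauliAct, Pi.add_apply]
  have harg : s + x + x' = s + (x + x') := by funext j; simp [Pi.add_apply]; ring
  have hexp : (∑ j, z j * (s j + x j)) + (∑ j, z' j * (s j + x j + x' j))
      = (∑ j, z j * x' j) + (∑ j, (z j + z' j) * (s j + (x j + x' j))) := by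
    rw [← Finset.sum_add_distrib, ← Finset.sum_add_distrib]
    refine Finset.sum_congr rfl fun j _ => ?_
    have two : (2 : ZMod 2) = 0 := rfl
    linear_combination (-(z j * x' j)) * two
  have hAB : ((-1 : ℂ)) ^ ((∑ j, z j * (s j + x j)).val)
        * (-1) ^ ((∑ j, z' j * (s j + x j + x' j)).val)
      = (-1) ^ ((∑ j, z j * x' j).val)
        * (-1) ^ ((∑ j, (z j + z' j) * (s j + (x j + x' j))).val) := by
    rw [← neg_pow_add, ← neg_pow_add, hexp]
  rw [harg]
  linear_combination (c * c' * ψ (s + (x + x'))) * hAB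

lemma pauliAct_one_zero {q : Type} [Fintype q] (ψ : (q → ZMod 2) → ℂ) :
    pauliAct 1 0 0 ψ = ψ := by
  funext s
  simp [pauliAct]


lemma coeff_unique {q : Type} [Fintype q] {ψ : (q → ZMod 2) → ℂ} (hne : ψ ≠ 0)
    {c c' : ℂ} {x z : q → ZMod 2} (h : pauliAct c x z ψ = ψ)
    (h' : pauliAct c' x z ψ = ψ) : c = c' := by
  obtain ⟨s, hs⟩ : ∃ s, ψ s ≠ 0 := by
    by_contra hcon
    push_neg at hcon
    exact hne (funext fun s => hcon s)
  have e1 := congrFun h s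
  have e2 := congrFun h' s
  simp only [pauliAct] at e1 e2
  have hfac : ((-1 : ℂ)) ^ ((∑ j, z j * (s j + x j)).val) * ψ (s + x) ≠ 0 := by
    intro hz0
    rw [mul_assoc, hz0, mul_zero] at e1
    exact hs e1.symm
  rw [mul_assoc] at e1 e2
  exact mul_right_cancel₀ hfac (e1.trans e2.symm)

lemma stab_ne_zero {q : Type} [Fintype q] {ψ : (q → ZMod 2) → ℂ} (hne : ψ ≠ 0)
    {c : ℂ} {x z : q → ZMod 2} (h : pauliAct c x z ψ = ψ) : c ≠ 0 := by
  obtain ⟨s, hs⟩ : ∃ s, ψ s ≠ 0 := by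
    by_contra hcon
    push_neg at hcon
    exact hne (funext fun s => hcon s)
  have e1 := congrFun h s
  simp only [pauliAct] at e1
  intro hc
  rw [hc, zero_mul, zero_mul] at e1
  exact hs e1.symm

lemma stab_comm {q : Type} [Fintype q] {ψ : (q → ZMod 2) → ℂ} (hne : ψ ≠ 0)
    {c c' : ℂ} {x z x' z' : q → ZMod 2} (h : pauliAct c x z ψ = ψ)
    (h' : pauliAct c' x' z' ψ = ψ) :
    (∑ j, z j * x' j) = (∑ j, z' j * x j) := by
  have H1 : pauliAct (c * c' * (-1) ^ ((∑ j, z j * x' j).val)) (x + x') (z + z') ψ = ψ := by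
    rw [← pauliAct_comp, h', h]
  have H2 : pauliAct (c' * c * (-1) ^ ((∑ j, z' j * x j).val)) (x + x') (z + z') ψ = ψ := by
    have hh := pauliAct_comp c' c x' z' x z ψ
    rw [h, h'] at hh
    rw [add_comm x' x, add_comm z' z] at hh
    exact hh.symm
  have hcc := coeff_unique hne H1 H2
  rw [mul_comm c' c] at hcc
  have hc := stab_ne_zero hne h
  have hc' := stab_ne_zero hne h'
  have := mul_left_cancel₀ (mul_ne_zero hc hc') hcc
  exact neg_pow_inj this


def stabM {q : Type} [Fintype q] (ψ : (q → ZMod 2) → ℂ) :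
    Submodule (ZMod 2) ((q → ZMod 2) × (q → ZMod 2)) where
  carrier := {v | ∃ c, pauliAct c v.1 v.2 ψ = ψ}
  zero_mem' := ⟨1, pauliAct_one_zero ψ⟩
  add_mem' := by
    rintro v w ⟨c, hc⟩ ⟨c', hc'⟩
    exact ⟨c * c' * (-1) ^ ((∑ j, v.2 j * w.1 j).val), by
      simp only [Prod.fst_add, Prod.snd_add]
      rw [← pauliAct_comp, hc', hc]⟩
  smul_mem' := by
    intro a v hv
    rcases zmod2_cases a with ha | ha <;> subst ha
    · simpa using ⟨1, pauliAct_one_zero ψ⟩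
    · simpa using hv

lemma hone {r : ℕ} : Fin.succ (0 : Fin (r + 1)) = (1 : Fin (r + 2)) := by
  ext
  simp [Fin.val_one]

lemma transfer {r : ℕ} {ψ : (Fin (r + 2) → ZMod 2) → ℂ} {c : ℂ}
    {x z : Fin (r + 2) → ZMod 2} (h : pauliAct c x z ψ = ψ)
    (hx : x 0 = x 1) (hz : z 0 = z 1) :
    pauliAct c (fun j => x j.succ.succ) (fun j => z j.succ.succ)
      (fun t => ∑ kk : ZMod 2, ψ (emb kk t)) = fun t => ∑ kk : ZMod 2, ψ (emb kk t) := by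
  funext t
  have key : ∀ kk : ZMod 2,
      c * (-1) ^ ((∑ j : Fin r, z j.succ.succ * (t j + x j.succ.succ)).val)
        * ψ (emb (kk + x 0) (fun j => t j + x j.succ.succ)) = ψ (emb kk t) := by
    intro kk
    have h1 := congrFun h (emb kk t)
    simp only [pauliAct] at h1
    have harg : emb kk t + x = emb (kk + x 0) (fun j => t j + x j.succ.succ) := by
      funext j
      refine Fin.cases ?_ (fun i => ?_) j
      · simp [emb, Pi.add_apply]
      · refine Fin.cases ?_ (fun i' => ?_) i
        · simp only [Pi.add_apply, emb, hone, Fin.cons_succ, Fin.cons_zero, ← hx]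
          rw [← hone]
          simp [Fin.cons_succ]
        · simp [emb, Pi.add_apply, Fin.cons_succ]
    have hexp : (∑ j, z j * ((emb kk t) j + x j))
        = ∑ j : Fin r, z j.succ.succ * (t j + x j.succ.succ) := by
      rw [Fin.sum_univ_succ, Fin.sum_univ_succ]
      have e0 : (emb kk t) 0 = kk := rfl
      have e1 : (emb kk t) (Fin.succ 0) = kk := by
        simp [emb, Fin.cons_succ]
      have eS : ∀ i : Fin r, (emb kk t) i.succ.succ = t i := by
        intro i; simp [emb, Fin.cons_succ]
      rw [e0, e1]
      simp only [eS]
      rw [hone, ← hx, ← hz]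
      rw [← add_assoc]
      rw [CharTwo.add_self_eq_zero, zero_add]
    rw [harg, hexp] at h1
    exact h1
  simp only [pauliAct]
  have hpt : ∀ kk : ZMod 2, (fun t' => ∑ k : ZMod 2, ψ (emb k t')) (t + fun j => x j.succ.succ)
      = ∑ k : ZMod 2, ψ (emb k (fun j => t j + x j.succ.succ)) := by
    intro kk; rfl
  calc c * (-1) ^ ((∑ j : Fin r, z j.succ.succ * (t j + x j.succ.succ)).val)
        * (fun t' => ∑ k : ZMod 2, ψ (emb k t')) (t + fun j => x j.succ.succ)
      = ∑ k : ZMod 2, c * (-1) ^ ((∑ j : Fin r, z j.succ.succ * (t j + x j.succ.succ)).val)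
          * ψ (emb k (fun j => t j + x j.succ.succ)) := by
        rw [hpt 0, Finset.mul_sum]
    _ = ∑ kk : ZMod 2, c * (-1) ^ ((∑ j : Fin r, z j.succ.succ * (t j + x j.succ.succ)).val)
          * ψ (emb (kk + x 0) (fun j => t j + x j.succ.succ)) := by
        refine (Fintype.sum_equiv (Equiv.addRight (x 0)) _ _ fun kk => rfl).symm
    _ = ∑ kk : ZMod 2, ψ (emb kk t) := Finset.sum_congr rfl fun kk _ => key kk


lemma finrank_map_add_inf_ker {K V V' : Type*} [Field K] [AddCommGroup V] [Module K V]
    [AddCommGroup V'] [Module K V'] [FiniteDimensional K V]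
    (p : Submodule K V) (f : V →ₗ[K] V') :
    Module.finrank K (p.map f) + Module.finrank K (p ⊓ LinearMap.ker f : Submodule K V)
      = Module.finrank K p := by
  have h := LinearMap.finrank_range_add_finrank_ker (f ∘ₗ p.subtype)
  rw [LinearMap.range_comp, Submodule.range_subtype] at h
  have h2 : Module.finrank K (p ⊓ LinearMap.ker f : Submodule K V)
      = Module.finrank K (LinearMap.ker (f ∘ₗ p.subtype)) := by
    rw [LinearMap.ker_comp, ← Submodule.finrank_map_subtype_eq p, Submodule.map_comap_subtype]
  rw [h2]
  exact h

end BellAux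

set_option maxHeartbeats 1000000
open BellAux Module Submodule LinearMap

/-- If `ψ` is an `m`-qubit stabilizer state and the Bell projection on the first
two qubits does not annihilate it, then the `(m-2)`-qubit state `ψ*` (defined by
`P⁺ψ = Φ⁺ ⊗ ψ*`, i.e. `ψ* t = Σ_k ψ(k,k,t)`) is again a stabilizer state. -/
theorem bellProj_stabilizer {r : ℕ} (ψ : (Fin (r + 2) → ZMod 2) → ℂ)
    (hψ : IsStabilizerState ψ) (h0 : bellProj ψ ≠ 0) :
    IsStabilizerState (fun t : Fin r → ZMod 2 => ∑ kk : ZMod 2, ψ (emb kk t)) := by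
  classical
  obtain ⟨hne, c, x, z, hLI, hstab⟩ := hψ
  set ψs : (Fin r → ZMod 2) → ℂ := fun t => ∑ kk : ZMod 2, ψ (emb kk t) with hψs
  have hψsne : ψs ≠ 0 := by
    intro hzero
    apply h0
    funext s
    have hz' : ψs (fun j => s j.succ.succ) = 0 := by rw [hzero]; rfl
    simp only [bellProj]
    rw [show (∑ kk : ZMod 2, ψ (emb kk fun j => s j.succ.succ)) = 0 from hz', mul_zero]
    rfl
  -- the span of the generators
  have hgLI : LinearIndependent (ZMod 2) (fun i => (x i, z i)) := by
    have hmap := hLI.map'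
      (LinearEquiv.sumArrowLequivProdArrow (Fin (r + 2)) (Fin (r + 2)) (ZMod 2)
        (ZMod 2)).toLinearMap
      (LinearEquiv.ker _)
    exact hmap
  set W : Submodule (ZMod 2) ((Fin (r + 2) → ZMod 2) × (Fin (r + 2) → ZMod 2)) :=
    Submodule.span (ZMod 2) (Set.range fun i => (x i, z i)) with hW
  have hWrank : finrank (ZMod 2) W = r + 2 := by
    rw [hW, finrank_span_eq_card hgLI]
    simp
  have hWstab : W ≤ stabM ψ := by
    rw [hW, Submodule.span_le]
    rintro _ ⟨i, rfl⟩
    exact ⟨c i, hstab i⟩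
  -- special vectors
  set e01 : Fin (r + 2) → ZMod 2 := Fin.cons 1 (Fin.cons 1 0) with he01
  have he0 : e01 0 = 1 := rfl
  have he1 : e01 1 = 1 := by rw [← hone]; simp [he01, Fin.cons_succ]
  have heS : ∀ i : Fin r, e01 i.succ.succ = 0 := by
    intro i; simp [he01, Fin.cons_succ]
  set aV : (Fin (r + 2) → ZMod 2) × (Fin (r + 2) → ZMod 2) := (e01, 0) with haV
  set bV : (Fin (r + 2) → ZMod 2) × (Fin (r + 2) → ZMod 2) := (0, e01) with hbV
  set Φ : ((Fin (r + 2) → ZMod 2) × (Fin (r + 2) → ZMod 2)) →ₗ[ZMod 2] (ZMod 2 × ZMod 2) :=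
    { toFun := fun v => (v.2 0 + v.2 1, v.1 0 + v.1 1)
      map_add' := fun v w => by
        simp only [Prod.fst_add, Prod.snd_add, Pi.add_apply, Prod.mk_add_mk, Prod.mk.injEq]
        constructor <;> ring
      map_smul' := fun a v => by
        simp only [Prod.smul_fst, Prod.smul_snd, Pi.smul_apply, smul_eq_mul, RingHom.id_apply,
          Prod.smul_mk, Prod.mk.injEq]
        constructor <;> ring } with hΦ
  set π : ((Fin (r + 2) → ZMod 2) × (Fin (r + 2) → ZMod 2)) →ₗ[ZMod 2]
      ((Fin r → ZMod 2) × (Fin r → ZMod 2)) :=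
    { toFun := fun v => (fun j => v.1 j.succ.succ, fun j => v.2 j.succ.succ)
      map_add' := fun v w => rfl
      map_smul' := fun a v => rfl } with hπ
  set AB : Submodule (ZMod 2) ((Fin (r + 2) → ZMod 2) × (Fin (r + 2) → ZMod 2)) :=
    Submodule.span (ZMod 2) {aV, bV} with hAB
  set M : Submodule (ZMod 2) ((Fin (r + 2) → ZMod 2) × (Fin (r + 2) → ZMod 2)) :=
    W ⊓ LinearMap.ker Φ with hM
  set D : Submodule (ZMod 2) ((Fin (r + 2) → ZMod 2) × (Fin (r + 2) → ZMod 2)) :=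
    W ⊓ AB with hD
  have hABk : AB ≤ LinearMap.ker Φ ⊓ LinearMap.ker π := by
    rw [hAB, Submodule.span_le]
    rintro v (rfl | rfl)
    · constructor
      · show Φ aV = 0
        have : (1 : ZMod 2) + 1 = 0 := rfl
        simp [hΦ, haV, he0, he1, this]
      · show π aV = 0
        simp only [hπ, haV]
        refine Prod.ext ?_ ?_ <;> funext j <;> simp [heS]
    · constructor
      · show Φ bV = 0
        have : (1 : ZMod 2) + 1 = 0 := rfl
        simp [hΦ, hbV, he0, he1, this]
      · show π bV = 0
        simp only [hπ, hbV]
        refine Prod.ext ?_ ?_ <;> funext j <;> simp [heS]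
  have hMD : M ⊓ LinearMap.ker π = D := by
    apply le_antisymm
    · rintro v ⟨⟨hvW, hvΦ⟩, hvπ⟩
      refine Submodule.mem_inf.mpr ⟨hvW, ?_⟩
      show v ∈ AB
      rw [hAB, Submodule.mem_span_pair]
      have hΦv : Φ v = 0 := hvΦ
      have hπv : π v = 0 := hvπ
      have hx01 : v.1 0 = v.1 1 := zmod2_add_eq_zero (congrArg Prod.snd hΦv)
      have hz01 : v.2 0 = v.2 1 := zmod2_add_eq_zero (congrArg Prod.fst hΦv)
      have hxS : ∀ j : Fin r, v.1 j.succ.succ = 0 := fun j => congrFun (congrArg Prod.fst hπv) j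
      have hzS : ∀ j : Fin r, v.2 j.succ.succ = 0 := fun j => congrFun (congrArg Prod.snd hπv) j
      refine ⟨v.1 0, v.2 0, ?_⟩
      refine Prod.ext ?_ ?_ <;> funext j <;>
        refine Fin.cases ?_ (fun i => ?_) j
      · simp [haV, hbV, he0, smul_eq_mul]
      · refine Fin.cases ?_ (fun i' => ?_) i
        · rw [hone]
          simp only [haV, hbV, Prod.fst_add, Prod.smul_fst, Pi.add_apply, Pi.smul_apply,
            smul_eq_mul, he1]
          simp [hx01]
        · simp only [haV, hbV, Prod.fst_add, Prod.smul_fst, Pi.add_apply, Pi.smul_apply,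
            smul_eq_mul, heS]
          simp [hxS]
      · simp [haV, hbV, he0, smul_eq_mul]
      · refine Fin.cases ?_ (fun i' => ?_) i
        · rw [hone]
          simp only [haV, hbV, Prod.snd_add, Prod.smul_snd, Pi.add_apply, Pi.smul_apply,
            smul_eq_mul, he1]
          simp [hz01]
        · simp only [haV, hbV, Prod.snd_add, Prod.smul_snd, Pi.add_apply, Pi.smul_apply,
            smul_eq_mul, heS]
          simp [hzS]
    · rw [hD, hM]
      refine le_inf (le_inf inf_le_left ?_) ?_
      · exact le_trans inf_le_right (hABk.trans inf_le_left)
      · exact le_trans inf_le_right (hABk.trans inf_le_right)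
  -- isotropy-based functional identity
  have hfun : ∀ w ∈ D, ∀ v ∈ W,
      (w.1 0) * (v.2 0 + v.2 1) + (w.2 0) * (v.1 0 + v.1 1) = 0 := by
    rintro w ⟨hwW, hwAB⟩ v hvW
    obtain ⟨cv, hcv⟩ := hWstab hvW
    obtain ⟨cw, hcw⟩ := hWstab hwW
    have hzx := stab_comm hne hcv hcw
    obtain ⟨s, t, hw⟩ := Submodule.mem_span_pair.mp hwAB
    have hw1 : ∀ j, w.1 j = s * e01 j := by
      intro j
      rw [← hw]
      simp [haV, hbV, smul_eq_mul]
    have hw2 : ∀ j, w.2 j = t * e01 j := by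
      intro j
      rw [← hw]
      simp [haV, hbV, smul_eq_mul]
    have hw10 : w.1 0 = s := by rw [hw1 0, he0, mul_one]
    have hw20 : w.2 0 = t := by rw [hw2 0, he0, mul_one]
    have hL : (∑ j, v.2 j * w.1 j) = s * (v.2 0 + v.2 1) := by
      simp only [hw1]
      rw [Fin.sum_univ_succ, Fin.sum_univ_succ]
      rw [hone]
      simp only [he0, he1, heS, mul_zero, mul_one, Finset.sum_const_zero, add_zero]
      ring
    have hR : (∑ j, w.2 j * v.1 j) = t * (v.1 0 + v.1 1) := by
      simp only [hw2]
      rw [Fin.sum_univ_succ, Fin.sum_univ_succ]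
      rw [hone]
      simp only [he0, he1, heS, zero_mul, mul_zero, mul_one, one_mul,
        Finset.sum_const_zero, add_zero]
      ring
    rw [hw10, hw20, ← hL, ← hR, hzx, CharTwo.add_self_eq_zero]
  -- rank bound
  have hABrank : finrank (ZMod 2) AB ≤ 2 := by
    have h1 := finrank_span_le_card (R := ZMod 2) ({aV, bV} :
      Set ((Fin (r + 2) → ZMod 2) × (Fin (r + 2) → ZMod 2)))
    rw [← hAB] at h1
    refine h1.trans ?_
    rw [Set.toFinset_insert, Set.toFinset_singleton]
    exact (Finset.card_insert_le _ _).trans (by simp)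
  have hrank2 : finrank (ZMod 2) (W.map Φ) + finrank (ZMod 2) D ≤ 2 := by
    by_cases hDbot : D = ⊥
    · rw [hDbot, finrank_bot]
      have h1 : finrank (ZMod 2) (W.map Φ) ≤ finrank (ZMod 2) (ZMod 2 × ZMod 2) :=
        Submodule.finrank_le _
      simpa [Module.finrank_prod, Module.finrank_self] using h1
    · obtain ⟨w, hwD, hw0⟩ := Submodule.exists_mem_ne_zero_of_ne_bot hDbot
      have hrange : ∀ v ∈ W, (w.1 0) * (v.2 0 + v.2 1) + (w.2 0) * (v.1 0 + v.1 1) = 0 :=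
        fun v hv => hfun w hwD v hv
      by_cases hD2 : AB ≤ D
      · -- both aV and bV in D; the image is zero
        have hmapbot : W.map Φ = ⊥ := by
          rw [Submodule.eq_bot_iff]
          rintro _ ⟨v, hvW, rfl⟩
          have ha' := hfun aV (hD2 (Submodule.subset_span (by simp))) v hvW
          have hb' := hfun bV (hD2 (Submodule.subset_span (by simp))) v hvW
          simp only [haV, hbV, he0, Pi.zero_apply, one_mul, zero_mul, add_zero, zero_add] at ha' hb'
          show ((v.2 0 + v.2 1, v.1 0 + v.1 1) : ZMod 2 × ZMod 2) = 0
          rw [ha', hb']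
          rfl
        rw [hmapbot, finrank_bot]
        have hDle : finrank (ZMod 2) D ≤ finrank (ZMod 2) AB :=
          Submodule.finrank_mono inf_le_right
        omega
      · -- D < AB, so finrank D ≤ 1; and the image lies in ker of a nonzero functional
        have hDlt : D < AB := lt_of_le_of_ne inf_le_right (fun h => hD2 (le_of_eq h.symm))
        have hDrank : finrank (ZMod 2) D ≤ 1 := by
          have := Submodule.finrank_lt_finrank_of_lt hDlt
          omega
        obtain ⟨s, t, hw⟩ := Submodule.mem_span_pair.mp ((inf_le_right : D ≤ AB) hwD)
        have hw10 : w.1 0 = s := by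
          rw [← hw]; simp [haV, hbV, smul_eq_mul, he0]
        have hw20 : w.2 0 = t := by
          rw [← hw]; simp [haV, hbV, smul_eq_mul, he0]
        have hst : ¬(s = 0 ∧ t = 0) := by
          rintro ⟨rfl, rfl⟩
          apply hw0
          rw [← hw]
          simp
        set L : (ZMod 2 × ZMod 2) →ₗ[ZMod 2] ZMod 2 :=
          { toFun := fun y => s * y.1 + t * y.2
            map_add' := fun y y' => by
              simp only [Prod.fst_add, Prod.snd_add]
              ring
            map_smul' := fun a y => by
              simp only [Prod.smul_fst, Prod.smul_snd, smul_eq_mul, RingHom.id_apply]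
              ring } with hLdef
        have hrangeL : W.map Φ ≤ LinearMap.ker L := by
          rintro _ ⟨v, hvW, rfl⟩
          have := hrange v hvW
          rw [hw10, hw20] at this
          show s * (v.2 0 + v.2 1) + t * (v.1 0 + v.1 1) = 0
          exact this
        have hy : ∃ y, L y ≠ 0 := by
          rcases not_and_or.mp hst with hs | ht
          · refine ⟨(1, 0), ?_⟩
            show s * 1 + t * 0 ≠ 0
            simpa using hs
          · refine ⟨(0, 1), ?_⟩
            show s * 0 + t * 1 ≠ 0
            simpa using ht
        have hkerL : finrank (ZMod 2) (LinearMap.ker L) ≤ 1 := by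
          obtain ⟨y, hy⟩ := hy
          have hne_top : LinearMap.ker L ≠ ⊤ := by
            intro htop
            exact hy (LinearMap.mem_ker.mp (htop ▸ Submodule.mem_top))
          have hlt := Submodule.finrank_lt (K := ZMod 2) hne_top
          rw [Module.finrank_prod, Module.finrank_self] at hlt
          omega
        have hmaple : finrank (ZMod 2) (W.map Φ) ≤ finrank (ZMod 2) (LinearMap.ker L) :=
          Submodule.finrank_mono hrangeL
        omega
  -- rank-nullity bookkeeping
  have eq1 := finrank_map_add_inf_ker W Φ
  rw [← hM, hWrank] at eq1
  have eq2 := finrank_map_add_inf_ker M π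
  rw [hMD] at eq2
  have hfr : r ≤ finrank (ZMod 2) (M.map π) := by omega
  -- extract an independent family
  set N := M.map π with hN
  let bN := Module.finBasis (ZMod 2) N
  set wf : Fin r → (Fin r → ZMod 2) × (Fin r → ZMod 2) :=
    fun i => (bN (Fin.castLE hfr i) : (Fin r → ZMod 2) × (Fin r → ZMod 2)) with hwf
  have hwLI : LinearIndependent (ZMod 2) wf := by
    have h1 := bN.linearIndependent.map' N.subtype N.ker_subtype
    exact h1.comp _ (Fin.castLE_injective hfr)
  have hwstab : ∀ i, ∃ cc : ℂ, pauliAct cc (wf i).1 (wf i).2 ψs = ψs := by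
    intro i
    have hmem : wf i ∈ N := by
      rw [hwf]
      exact SetLike.coe_mem _
    rw [hN] at hmem
    obtain ⟨v, hvM, hvπ⟩ := hmem
    obtain ⟨hvW, hvΦ⟩ := hvM
    obtain ⟨cv, hcv⟩ := hWstab hvW
    have hΦv : Φ v = 0 := hvΦ
    have hx01 : v.1 0 = v.1 1 := zmod2_add_eq_zero (congrArg Prod.snd hΦv)
    have hz01 : v.2 0 = v.2 1 := zmod2_add_eq_zero (congrArg Prod.fst hΦv)
    refine ⟨cv, ?_⟩
    have htr := transfer hcv hx01 hz01
    rw [← hvπ]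
    exact htr
  choose cc hcc using hwstab
  refine ⟨hψsne, ?_⟩
  have hcard : Fintype.card (Fin r) = r := Fintype.card_fin r
  refine ⟨fun i => cc (Fin.cast hcard i), fun i => (wf (Fin.cast hcard i)).1,
    fun i => (wf (Fin.cast hcard i)).2, ?_, fun i => hcc (Fin.cast hcard i)⟩
  have h2 := hwLI.map'
    (LinearEquiv.sumArrowLequivProdArrow (Fin r) (Fin r) (ZMod 2) (ZMod 2)).symm.toLinearMap
    (LinearEquiv.ker _)
  exact h2.comp (Fin.cast hcard) (Fin.cast_injective hcard)
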